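/- Suppose the symmetric Assumption 2.1(i) holds and let η ∈ [−1,1]. Define f₂(z) = (B(z)+C(z) − z^K·T)² − η²·F(z)² and g₂(z) = 4η²·A(z)·D(z). Then for every z ∈ ℂ with |z| = 1: |f₂(z)| ≥ f₂(1) and |g₂(z)| ≤ g₂(1); moreover f₂(1) − g₂(1) = (1−η²)·(A(1)+D(1))² ≥ 0. -/

import Mathlib

open scoped BigOperators

/-- `GC a z = Σ_{m=0}^∞ a_m z^m`, encoding `A(z) = Σ_{k=-∞}^K a_k z^{K-k}`
via the reindexing `m = K - k`. -/
noncomputable def GC (a : ℕ → ℝ) (z : ℂ) : ℂ := ∑' m : ℕ, (a m : ℂ) * z ^ m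

/-- `A(1)` (a real number). -/
noncomputable def Gone (a : ℕ → ℝ) : ℝ := ∑' m : ℕ, a m

/-- `A'(1) = Σ_{k=-∞}^K (K-k) a_k`. -/
noncomputable def Gder (a : ℕ → ℝ) : ℝ := ∑' m : ℕ, (m : ℝ) * a m

/-- `T = A(1)+B(1)+C(1)+D(1)`. -/
noncomputable def Tval (a b cc d : ℕ → ℝ) : ℝ := Gone a + Gone b + Gone cc + Gone d

/-- `F(z) = z^K (A(1)+B(1)-C(1)-D(1)) - B(z) + C(z)`. -/
noncomputable def FC (K : ℕ) (a b cc d : ℕ → ℝ) (z : ℂ) : ℂ :=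
  z ^ K * ((Gone a + Gone b - Gone cc - Gone d : ℝ) : ℂ) - GC b z + GC cc z

/-- `f₂(z) = (B(z)+C(z) - z^K T)² - η² F(z)²`. -/
noncomputable def f2C (K : ℕ) (a b cc d : ℕ → ℝ) (η : ℝ) (z : ℂ) : ℂ :=
  (GC b z + GC cc z - z ^ K * (Tval a b cc d : ℝ)) ^ 2
    - (η : ℂ) ^ 2 * FC K a b cc d z ^ 2

/-- `g₂(z) = 4η² A(z) D(z)`. -/
noncomputable def g2C (a d : ℕ → ℝ) (η : ℝ) (z : ℂ) : ℂ :=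
  4 * (η : ℂ) ^ 2 * GC a z * GC d z

/-- The (real) value `f₂(1) = (B(1)+C(1) - T)² - η² F(1)²`. -/
noncomputable def f2one (K : ℕ) (a b cc d : ℕ → ℝ) (η : ℝ) : ℝ :=
  (Gone b + Gone cc - Tval a b cc d) ^ 2
    - η ^ 2 * ((Gone a + Gone b - Gone cc - Gone d) - Gone b + Gone cc) ^ 2

/-- The (real) value `g₂(1) = 4η² A(1) D(1)`. -/
noncomputable def g2one (a d : ℕ → ℝ) (η : ℝ) : ℝ := 4 * η ^ 2 * Gone a * Gone d

lemma summable_GC (e : ℕ → ℝ) (hse : Summable e) (z : ℂ) (hz : ‖z‖ ≤ 1) :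
    Summable (fun m => (e m : ℂ) * z ^ m) := by
  apply Summable.of_norm
  apply Summable.of_nonneg_of_le (fun m => norm_nonneg _) _ hse.abs
  intro m
  rw [norm_mul, norm_pow]
  calc ‖(e m : ℂ)‖ * ‖z‖ ^ m ≤ ‖(e m : ℂ)‖ * 1 ^ m := by
        apply mul_le_mul_of_nonneg_left _ (norm_nonneg _)
        exact pow_le_pow_left₀ (norm_nonneg _) hz m
    _ = |e m| := by simp

lemma abs_GC_le (e : ℕ → ℝ) (he : ∀ m, 0 ≤ e m) (hse : Summable e) (z : ℂ)
    (hz : ‖z‖ = 1) : ‖GC e z‖ ≤ Gone e := by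
  unfold GC Gone
  have h1 : Summable (fun m => ‖(e m : ℂ) * z ^ m‖) := by
    apply Summable.congr hse.abs
    intro m
    rw [norm_mul, norm_pow, hz]
    simp
  calc ‖∑' m, (e m : ℂ) * z ^ m‖ = ‖∑' m, (e m : ℂ) * z ^ m‖ := rfl
    _ ≤ ∑' m, ‖(e m : ℂ) * z ^ m‖ := norm_tsum_le_tsum_norm h1
    _ = ∑' m, e m := by
        apply tsum_congr; intro m
        rw [norm_mul, norm_pow, hz]
        simp [abs_of_nonneg (he m)]

lemma lower_bound (K : ℕ) (e : ℕ → ℝ) (he : ∀ m, 0 ≤ e m) (hse : Summable e)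
    (s : ℝ) (hs : 0 ≤ s) (z : ℂ) (hz : ‖z‖ = 1) :
    s ≤ ‖GC e z - z ^ K * ((Gone e + s : ℝ) : ℂ)‖ := by
  have h1 : (starRingEnd ℂ z) * z = 1 := by
    rw [mul_comm, Complex.mul_conj]
    norm_cast
    rw [Complex.normSq_eq_norm_sq, hz]; norm_num
  have hmul : (starRingEnd ℂ z) ^ K * (GC e z - z ^ K * ((Gone e + s : ℝ) : ℂ))
      = (starRingEnd ℂ z) ^ K * GC e z - ((Gone e + s : ℝ) : ℂ) := by
    have : (starRingEnd ℂ z) ^ K * z ^ K = 1 := by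
      rw [← mul_pow, h1, one_pow]
    rw [mul_sub]; congr 1
    rw [← mul_assoc, this, one_mul]
  have habs : ‖(starRingEnd ℂ z) ^ K * GC e z - ((Gone e + s : ℝ) : ℂ)‖
      = ‖GC e z - z ^ K * ((Gone e + s : ℝ) : ℂ)‖ := by
    rw [← hmul, norm_mul, norm_pow, Complex.norm_conj, hz, one_pow, one_mul]
  rw [← habs]
  set v := (starRingEnd ℂ z) ^ K * GC e z - ((Gone e + s : ℝ) : ℂ) with hv
  have hre : v.re ≤ -s := by
    have h2 : ((starRingEnd ℂ z) ^ K * GC e z).re ≤ Gone e := by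
      calc ((starRingEnd ℂ z) ^ K * GC e z).re
          ≤ ‖(starRingEnd ℂ z) ^ K * GC e z‖ := Complex.re_le_norm _
        _ = ‖GC e z‖ := by
            rw [norm_mul, norm_pow, Complex.norm_conj, hz, one_pow, one_mul]
        _ ≤ Gone e := abs_GC_le e he hse z hz
    have : v.re = ((starRingEnd ℂ z) ^ K * GC e z).re - (Gone e + s) := by
      simp [hv, Complex.sub_re, Complex.ofReal_re]
    linarith
  calc s ≤ -v.re := by linarith
    _ ≤ |v.re| := neg_le_abs _
    _ ≤ ‖v‖ := Complex.abs_re_le_norm v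

lemma GC_comb (r s : ℝ) (b c : ℕ → ℝ) (hb : Summable b) (hc : Summable c)
    (z : ℂ) (hz : ‖z‖ ≤ 1) :
    GC (fun m => r * b m + s * c m) z = (r : ℂ) * GC b z + (s : ℂ) * GC c z := by
  unfold GC
  have h1 : Summable (fun m => (r : ℂ) * ((b m : ℂ) * z ^ m)) :=
    (summable_GC b hb z hz).mul_left _
  have h2 : Summable (fun m => (s : ℂ) * ((c m : ℂ) * z ^ m)) :=
    (summable_GC c hc z hz).mul_left _
  calc ∑' m, ((r * b m + s * c m : ℝ) : ℂ) * z ^ m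
      = ∑' m, ((r : ℂ) * ((b m : ℂ) * z ^ m) + (s : ℂ) * ((c m : ℂ) * z ^ m)) := by
        apply tsum_congr; intro m; push_cast; ring
    _ = (∑' m, (r : ℂ) * ((b m : ℂ) * z ^ m)) + ∑' m, (s : ℂ) * ((c m : ℂ) * z ^ m) :=
        Summable.tsum_add h1 h2
    _ = (r : ℂ) * GC b z + (s : ℂ) * GC c z := by
        unfold GC; rw [tsum_mul_left, tsum_mul_left]

lemma Gone_comb (r s : ℝ) (b c : ℕ → ℝ) (hb : Summable b) (hc : Summable c) :
    Gone (fun m => r * b m + s * c m) = r * Gone b + s * Gone c := by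
  unfold Gone
  rw [Summable.tsum_add (hb.mul_left r) (hc.mul_left s), tsum_mul_left, tsum_mul_left]

/-- Under the symmetric Assumption 2.1(i), for `η ∈ [-1,1]` and every `z` on the unit
circle: `|f₂(z)| ≥ f₂(1)` and `|g₂(z)| ≤ g₂(1)`; moreover
`f₂(1) - g₂(1) = (1-η²)(A(1)+D(1))² ≥ 0`. -/
theorem stmt10 (c K : ℕ) (hc : 1 ≤ c) (hK : 1 ≤ K) (a b cc d : ℕ → ℝ)
    (nna : ∀ m, 0 ≤ a m) (nnb : ∀ m, 0 ≤ b m)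
    (nnc : ∀ m, 0 ≤ cc m) (nnd : ∀ m, 0 ≤ d m)
    (suma : Summable a) (sumb : Summable b) (sumc : Summable cc) (sumd : Summable d)
    (η : ℝ) (hη : η ∈ Set.Icc (-1 : ℝ) 1) :
    (∀ z : ℂ, ‖z‖ = 1 →
        f2one K a b cc d η ≤ ‖f2C K a b cc d η z‖
        ∧ ‖g2C a d η z‖ ≤ g2one a d η)
    ∧ f2one K a b cc d η - g2one a d η = (1 - η ^ 2) * (Gone a + Gone d) ^ 2
    ∧ 0 ≤ (1 - η ^ 2) * (Gone a + Gone d) ^ 2 := by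
  
  obtain ⟨hη1, hη2⟩ := hη
  have h1m : (0:ℝ) ≤ 1 - η := by linarith
  have h1p : (0:ℝ) ≤ 1 + η := by linarith
  have hA0 : 0 ≤ Gone a := tsum_nonneg nna
  have hD0 : 0 ≤ Gone d := tsum_nonneg nnd
  refine ⟨?_, ?_, ?_⟩
  · intro z hz
    constructor
    · -- f₂ bound via factorization
      set eP : ℕ → ℝ := fun m => (1 - η) * b m + (1 + η) * cc m with heP
      set eQ : ℕ → ℝ := fun m => (1 + η) * b m + (1 - η) * cc m with heQ
      set sP : ℝ := (1 - η) * Gone a + (1 + η) * Gone d with hsP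
      set sQ : ℝ := (1 + η) * Gone a + (1 - η) * Gone d with hsQ
      have hsP0 : 0 ≤ sP := add_nonneg (mul_nonneg h1m hA0) (mul_nonneg h1p hD0)
      have hsQ0 : 0 ≤ sQ := add_nonneg (mul_nonneg h1p hA0) (mul_nonneg h1m hD0)
      have hseP : Summable eP := (sumb.mul_left _).add (sumc.mul_left _)
      have hseQ : Summable eQ := (sumb.mul_left _).add (sumc.mul_left _)
      have hneP : ∀ m, 0 ≤ eP m := fun m =>
        add_nonneg (mul_nonneg h1m (nnb m)) (mul_nonneg h1p (nnc m))
      have hneQ : ∀ m, 0 ≤ eQ m := fun m =>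
        add_nonneg (mul_nonneg h1p (nnb m)) (mul_nonneg h1m (nnc m))
      have hfact : f2C K a b cc d η z
          = (GC eQ z - z ^ K * ((Gone eQ + sQ : ℝ) : ℂ))
            * (GC eP z - z ^ K * ((Gone eP + sP : ℝ) : ℂ)) := by
        rw [heP, heQ, GC_comb _ _ _ _ sumb sumc z hz.le,
          GC_comb _ _ _ _ sumb sumc z hz.le,
          Gone_comb _ _ _ _ sumb sumc, Gone_comb _ _ _ _ sumb sumc]
        simp only [hsP, hsQ]
        unfold f2C FC Tval
        push_cast
        ring
      have hP := lower_bound K eP hneP hseP sP hsP0 z hz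
      have hQ := lower_bound K eQ hneQ hseQ sQ hsQ0 z hz
      have hval : f2one K a b cc d η = sQ * sP := by
        unfold f2one Tval
        rw [hsP, hsQ]; ring
      rw [hfact, norm_mul, hval]
      exact mul_le_mul hQ hP hsP0 (le_trans hsQ0 hQ)
    · -- g₂ bound
      unfold g2C g2one
      rw [norm_mul, norm_mul, norm_mul, norm_pow]
      simp only [Complex.norm_real, Real.norm_eq_abs, sq_abs]
      have h4 : ‖(4 : ℂ)‖ = 4 := by norm_num
      rw [h4]
      have hga := abs_GC_le a nna suma z hz
      have hgd := abs_GC_le d nnd sumd z hz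
      have h1 : 0 ≤ 4 * η ^ 2 := by positivity
      calc 4 * η ^ 2 * ‖GC a z‖ * ‖GC d z‖
          ≤ 4 * η ^ 2 * Gone a * ‖GC d z‖ := by
            apply mul_le_mul_of_nonneg_right _ (norm_nonneg _)
            exact mul_le_mul_of_nonneg_left hga h1
        _ ≤ 4 * η ^ 2 * Gone a * Gone d := by
            apply mul_le_mul_of_nonneg_left hgd
            positivity
  · unfold f2one g2one Tval
    ring
  · apply mul_nonneg _ (sq_nonneg _)
    nlinarith
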